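/- Let A be an n×m real matrix of rank k (so σ_k(A) > 0 and σ_{k+1}(A) = 0) and let Â be an n×m real matrix with ‖Â − A‖ ≤ ε ≤ σ_k(A)/2. Let U and Û be the n×k left factors of rank-k truncated SVDs of A and Â respectively. Then ‖Û Ûᵀ − U Uᵀ‖ ≤ 4ε/σ_k(A). -/

import Mathlib

open Matrix

/-- The `j`-th largest singular value (1-indexed) of a real `n × m` matrix,
defined as the square root of the `j`-th largest eigenvalue of `Aᵀ * A`;
it is `0` when `j = 0` or `j > m`. -/
noncomputable def sval {n m : ℕ} (A : Matrix (Fin n) (Fin m) ℝ) (j : ℕ) : ℝ :=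
  if 1 ≤ j ∧ j ≤ m then
    (((Finset.univ.val.map fun i =>
        Real.sqrt ((by simpa using Matrix.isHermitian_conjTranspose_mul_self A : (Aᵀ * A).IsHermitian).eigenvalues i)).sort (· ≤ ·)).getD
      (m - j) 0)
  else 0

/-- The spectral norm (ℓ₂ operator norm) of a real matrix, i.e. its largest singular value. -/
noncomputable def matSpectralNorm {n m : ℕ} (A : Matrix (Fin n) (Fin m) ℝ) : ℝ := sval A 1

/-- Euclidean norm of a vector. -/
noncomputable def evnorm {n : ℕ} (x : Fin n → ℝ) : ℝ := Real.sqrt (∑ i, (x i) ^ 2)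

/-- `M^{1/2}`: the unique positive semidefinite square root of a positive semidefinite
real matrix (junk value `0` if `M` is not positive semidefinite). -/
noncomputable def msqrt {k : ℕ} (M : Matrix (Fin k) (Fin k) ℝ) : Matrix (Fin k) (Fin k) ℝ :=
  by classical exact if h : M.PosSemidef then ((h.1.eigenvectorUnitary : Matrix (Fin k) (Fin k) ℝ) * diagonal (fun i => Real.sqrt (h.1.eigenvalues i)) * (star h.1.eigenvectorUnitary : Matrix (Fin k) (Fin k) ℝ)) else 0


namespace WedinAux
variable {n m k p q : ℕ}


noncomputable def en {p : ℕ} (x : Fin p → ℝ) : ℝ := ‖(WithLp.equiv 2 (Fin p → ℝ)).symm x‖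

variable {n m k p q : ℕ}

lemma en_nonneg (x : Fin p → ℝ) : 0 ≤ en x := norm_nonneg _

lemma en_sq (x : Fin p → ℝ) : en x ^ 2 = x ⬝ᵥ x := by
  unfold en
  rw [EuclideanSpace.norm_eq, Real.sq_sqrt (by positivity)]
  simp [dotProduct, sq]

lemma dot_nonneg (x : Fin p → ℝ) : 0 ≤ x ⬝ᵥ x := by
  rw [← en_sq]; positivity

lemma en_eq (x : Fin p → ℝ) : en x = Real.sqrt (x ⬝ᵥ x) := by
  rw [← en_sq, Real.sqrt_sq (en_nonneg x)]

lemma en_add_le (x y : Fin p → ℝ) : en (x + y) ≤ en x + en y := norm_add_le _ _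

lemma en_zero : en (0 : Fin p → ℝ) = 0 := norm_zero

lemma en_sub_le (x y : Fin p → ℝ) : en (x - y) ≤ en x + en y := norm_sub_le _ _

lemma en_eq_zero {x : Fin p → ℝ} (h : en x = 0) : x = 0 := by
  have := norm_eq_zero.mp h
  have h2 := congrArg (WithLp.equiv 2 (Fin p → ℝ)) this
  simpa using h2

lemma dot_le_en_mul_en (x y : Fin p → ℝ) : x ⬝ᵥ y ≤ en x * en y := by
  have h := real_inner_le_norm ((WithLp.equiv 2 (Fin p → ℝ)).symm x) ((WithLp.equiv 2 (Fin p → ℝ)).symm y)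
  have : (inner ℝ ((WithLp.equiv 2 (Fin p → ℝ)).symm x) ((WithLp.equiv 2 (Fin p → ℝ)).symm y) : ℝ) = x ⬝ᵥ y := by
    simp [PiLp.inner_apply, dotProduct, RCLike.inner_apply, mul_comm]
  rw [this] at h
  exact h








-- H7
lemma dot_mulVec_t (M : Matrix (Fin n) (Fin m) ℝ) (x : Fin n → ℝ) (y : Fin m → ℝ) :
    x ⬝ᵥ (M *ᵥ y) = (Mᵀ *ᵥ x) ⬝ᵥ y := by
  rw [Matrix.dotProduct_mulVec, Matrix.mulVec_transpose]

-- quadratic form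
lemma en_mulVec_sq (M : Matrix (Fin n) (Fin m) ℝ) (x : Fin m → ℝ) :
    en (M *ᵥ x) ^ 2 = x ⬝ᵥ ((Mᵀ * M) *ᵥ x) := by
  rw [en_sq, dot_mulVec_t M (M *ᵥ x) x, dotProduct_comm, Matrix.mulVec_mulVec]

lemma dot_self_orth {V : Matrix (Fin m) (Fin k) ℝ} (hV : Vᵀ * V = 1) (c : Fin k → ℝ) :
    (V *ᵥ c) ⬝ᵥ (V *ᵥ c) = c ⬝ᵥ c := by
  rw [dot_mulVec_t, Matrix.mulVec_mulVec, hV, Matrix.one_mulVec]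

-- orthonormal columns: isometry
lemma en_orth_mulVec {V : Matrix (Fin m) (Fin k) ℝ} (hV : Vᵀ * V = 1) (c : Fin k → ℝ) :
    en (V *ᵥ c) = en c := by
  rw [en_eq, en_eq, dot_self_orth hV]

lemma pyth {V : Matrix (Fin m) (Fin k) ℝ} (hV : Vᵀ * V = 1) (x : Fin m → ℝ) :
    en (Vᵀ *ᵥ x) ^ 2 + en (x - V *ᵥ (Vᵀ *ᵥ x)) ^ 2 = en x ^ 2 := by
  rw [en_sq, en_sq, en_sq]
  have h1 : (Vᵀ *ᵥ x) ⬝ᵥ (Vᵀ *ᵥ x) = x ⬝ᵥ (V *ᵥ (Vᵀ *ᵥ x)) := by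
    rw [dot_mulVec_t V x (Vᵀ *ᵥ x)]
  have h2 : (V *ᵥ (Vᵀ *ᵥ x)) ⬝ᵥ (V *ᵥ (Vᵀ *ᵥ x)) = x ⬝ᵥ (V *ᵥ (Vᵀ *ᵥ x)) := by
    rw [dot_self_orth hV, h1, dot_mulVec_t V x (Vᵀ *ᵥ x)]
  simp only [dotProduct_sub, sub_dotProduct]
  rw [dotProduct_comm (V *ᵥ (Vᵀ *ᵥ x)) x]
  rw [h2]
  linarith [h1]
  
-- contraction of Vᵀ
lemma en_t_mulVec_le {V : Matrix (Fin m) (Fin k) ℝ} (hV : Vᵀ * V = 1) (x : Fin m → ℝ) :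
    en (Vᵀ *ᵥ x) ≤ en x := by
  have key := pyth hV x
  nlinarith [en_nonneg (Vᵀ *ᵥ x), en_nonneg x, sq_nonneg (en (x - V *ᵥ (Vᵀ *ᵥ x)))]

-- H10: 1 - P contraction
lemma en_perp_le {U : Matrix (Fin n) (Fin k) ℝ} (hU : Uᵀ * U = 1) (x : Fin n → ℝ) :
    en (x - U *ᵥ (Uᵀ *ᵥ x)) ≤ en x := by
  have key := pyth hU x
  nlinarith [en_nonneg (x - U *ᵥ (Uᵀ *ᵥ x)), en_nonneg x, sq_nonneg (en (Uᵀ *ᵥ x))]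

-- H12 diag lower bound
lemma en_diag_lower {d : Fin k → ℝ} {s : ℝ} (hs : 0 ≤ s) (hd : ∀ j, s ≤ d j) (e : Fin k → ℝ) :
    s * en e ≤ en (fun j => d j * e j) := by
  have h1 : (s * en e) ^ 2 ≤ en (fun j => d j * e j) ^ 2 := by
    rw [mul_pow, en_sq, en_sq]
    unfold dotProduct
    rw [Finset.mul_sum]
    apply Finset.sum_le_sum
    intro j _
    have := hd j
    dsimp only
    nlinarith [sq_nonneg (e j), mul_le_mul this this hs (hs.trans this)]
  have h2 : 0 ≤ s * en e := mul_nonneg hs (en_nonneg e)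
  nlinarith [en_nonneg (fun j => d j * e j)]




lemma ct_eq_t (M : Matrix (Fin n) (Fin m) ℝ) : Mᴴ = Mᵀ := by
  ext i j; simp [conjTranspose_apply]

noncomputable def lam (B : Matrix (Fin n) (Fin m) ℝ) : Fin m → ℝ :=
  (show (Bᵀ * B).IsHermitian by simpa using Matrix.isHermitian_conjTranspose_mul_self B).eigenvalues

noncomputable def LL (B : Matrix (Fin n) (Fin m) ℝ) : List ℝ :=
  (Finset.univ.val.map (lam B)).sort (· ≤ ·)

noncomputable def g (B : Matrix (Fin n) (Fin m) ℝ) (p : ℕ) : ℝ := (LL B).getD p 0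

lemma lam_nonneg (B : Matrix (Fin n) (Fin m) ℝ) (i : Fin m) : 0 ≤ lam B i :=
  Matrix.eigenvalues_conjTranspose_mul_self_nonneg B i

lemma LL_length (B : Matrix (Fin n) (Fin m) ℝ) : (LL B).length = m := by
  unfold LL
  rw [Multiset.length_sort, Multiset.card_map]
  simp

lemma LL_sorted (B : Matrix (Fin n) (Fin m) ℝ) : (LL B).Pairwise (· ≤ ·) :=
  Multiset.pairwise_sort _ _

lemma g_mono (B : Matrix (Fin n) (Fin m) ℝ) {p q : ℕ} (hpq : p ≤ q) (hq : q < m) :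
    g B p ≤ g B q := by
  unfold g
  have hl := LL_length B
  rw [List.getD_eq_getElem _ _ (by omega), List.getD_eq_getElem _ _ (by omega)]
  have := (LL_sorted B).rel_get_of_le (a := ⟨p, by omega⟩) (b := ⟨q, by omega⟩) (by simpa using hpq)
  simpa [List.get_eq_getElem] using this

-- multiset bridge
lemma LL_coe (B : Matrix (Fin n) (Fin m) ℝ) :
    (↑(LL B) : Multiset ℝ) = Finset.univ.val.map (lam B) := Multiset.sort_eq _ _

lemma multiset_getD (l : List ℝ) (h : l.length = m) :
    Multiset.map (fun p : Fin m => l.getD p 0) Finset.univ.val = ↑l := by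
  have hl2 : List.map (fun p : Fin m => l.getD ↑p 0) (List.finRange m) = l := by
    apply List.ext_getElem
    · simp [h]
    · intro i h1 h2
      simp only [List.getElem_map, List.getElem_finRange]
      rw [List.getD_eq_getElem _ _ (by omega)]
      simp
  rw [Fin.univ_def]
  show Multiset.map (fun p : Fin m => l.getD ↑p 0) (↑(List.finRange m)) = (↑l : Multiset ℝ)
  rw [Multiset.map_coe, hl2]

lemma bridge (B : Matrix (Fin n) (Fin m) ℝ) :
    Multiset.map (fun p : Fin m => g B p) Finset.univ.val = Finset.univ.val.map (lam B) := by
  rw [← LL_coe]; exact multiset_getD _ (LL_length B)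

lemma card_eq (B : Matrix (Fin n) (Fin m) ℝ) (P : ℝ → Prop) [DecidablePred P] :
    (Finset.univ.filter fun i : Fin m => P (lam B i)).card
      = (Finset.univ.filter fun p : Fin m => P (g B p)).card := by
  have h1 : ∀ f : Fin m → ℝ, (Finset.univ.filter fun i : Fin m => P (f i)).card
      = Multiset.countP P (Finset.univ.val.map f) := by
    intro f
    rw [Multiset.countP_map]
    rfl
  rw [h1, h1, ← bridge B]

lemma mem_g (B : Matrix (Fin n) (Fin m) ℝ) (p : Fin m) : ∃ i, lam B i = g B p := by
  have : g B p ∈ Multiset.map (fun p : Fin m => g B p) Finset.univ.val := by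
    apply Multiset.mem_map_of_mem; simp
  rw [bridge B] at this
  obtain ⟨i, _, hi⟩ := Multiset.mem_map.mp this
  exact ⟨i, hi⟩

lemma g_mem (B : Matrix (Fin n) (Fin m) ℝ) (i : Fin m) : ∃ p : Fin m, g B p = lam B i := by
  have : lam B i ∈ Finset.univ.val.map (lam B) := by apply Multiset.mem_map_of_mem; simp
  rw [← bridge B] at this
  obtain ⟨p, _, hp⟩ := Multiset.mem_map.mp this
  exact ⟨p, hp⟩

lemma g_nonneg (B : Matrix (Fin n) (Fin m) ℝ) (p : ℕ) : 0 ≤ g B p := by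
  by_cases hp : p < m
  · obtain ⟨i, hi⟩ := mem_g B ⟨p, hp⟩
    rw [← hi]; exact lam_nonneg B i
  · unfold g
    rw [List.getD_eq_default]
    rw [LL_length]; omega

-- sval in terms of g
lemma sval_eq_sqrt_g (B : Matrix (Fin n) (Fin m) ℝ) {j : ℕ} (h1 : 1 ≤ j) (h2 : j ≤ m) :
    sval B j = Real.sqrt (g B (m - j)) := by
  unfold sval
  rw [if_pos ⟨h1, h2⟩]
  have hmap : ((Finset.univ.val.map fun i =>
      Real.sqrt ((by simpa using Matrix.isHermitian_conjTranspose_mul_self B : (Bᵀ * B).IsHermitian).eigenvalues i)).sort (· ≤ ·))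
      = (LL B).map Real.sqrt := by
    apply fun p s1 s2 => List.Perm.eq_of_pairwise' (r := (· ≤ · : ℝ → ℝ → Prop)) s1 s2 p
    · apply Multiset.coe_eq_coe.mp
      rw [Multiset.sort_eq, ← Multiset.map_coe, LL_coe, Multiset.map_map]
      rfl
    · exact Multiset.pairwise_sort _ _
    · exact List.Pairwise.map _ (fun a b hab => Real.sqrt_le_sqrt hab) (LL_sorted B)
  rw [hmap]
  have hlt : m - j < (LL B).length := by rw [LL_length]; omega
  rw [List.getD_eq_getElem _ _ (by simpa using hlt), List.getElem_map]
  rw [g, List.getD_eq_getElem _ _ hlt]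

lemma sval_nonneg (B : Matrix (Fin n) (Fin m) ℝ) (j : ℕ) : 0 ≤ sval B j := by
  by_cases h : 1 ≤ j ∧ j ≤ m
  · rw [sval_eq_sqrt_g B h.1 h.2]; positivity
  · unfold sval; rw [if_neg h]

lemma sval_sq (B : Matrix (Fin n) (Fin m) ℝ) {j : ℕ} (h1 : 1 ≤ j) (h2 : j ≤ m) :
    sval B j ^ 2 = g B (m - j) := by
  rw [sval_eq_sqrt_g B h1 h2, Real.sq_sqrt (g_nonneg B _)]

lemma sval_antitone (B : Matrix (Fin n) (Fin m) ℝ) {i j : ℕ} (h1 : 1 ≤ i) (hij : i ≤ j)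
    (h2 : j ≤ m) : sval B j ≤ sval B i := by
  rw [sval_eq_sqrt_g B h1 (le_trans hij h2), sval_eq_sqrt_g B (le_trans h1 hij) h2]
  exact Real.sqrt_le_sqrt (g_mono B (by omega) (by omega))

-- spectral package
lemma spectral (B : Matrix (Fin n) (Fin m) ℝ) :
    ∃ W : Matrix (Fin m) (Fin m) ℝ, Wᵀ * W = 1 ∧ W * Wᵀ = 1 ∧
      Bᵀ * B = W * Matrix.diagonal (lam B) * Wᵀ := by
  have h : (Bᵀ * B).IsHermitian := by simpa using Matrix.isHermitian_conjTranspose_mul_self B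
  refine ⟨(h.eigenvectorUnitary : Matrix (Fin m) (Fin m) ℝ), ?_, ?_, ?_⟩
  · have := Unitary.coe_star_mul_self h.eigenvectorUnitary
    rwa [Matrix.star_eq_conjTranspose, ct_eq_t] at this
  · have := Unitary.coe_mul_star_self h.eigenvectorUnitary
    rwa [Unitary.coe_star, Matrix.star_eq_conjTranspose, ct_eq_t] at this
  · have hs := h.spectral_theorem
    have hd : (RCLike.ofReal ∘ h.eigenvalues : Fin m → ℝ) = lam B := by
      funext i; simp [lam]
    rw [hd] at hs
    calc Bᵀ * B = Bᴴ * B := by rw [ct_eq_t]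
    _ = ↑h.eigenvectorUnitary * Matrix.diagonal (lam B) * star ↑h.eigenvectorUnitary := by
        rw [ct_eq_t]; exact hs.trans (Unitary.conjStarAlgAut_apply _ _)
    _ = _ := congrArg (HMul.hMul _) ((Matrix.star_eq_conjTranspose _).trans (ct_eq_t _))

-- counting lemmas
lemma card_fin_lt {m : ℕ} (q : ℕ) :
    (Finset.univ.filter fun p : Fin m => (p : ℕ) < q).card ≤ q := by
  classical
  have h : (Finset.univ.filter fun p : Fin m => (p : ℕ) < q).card ≤ (Finset.range q).card :=
    Finset.card_le_card_of_injOn (fun p : Fin m => (p : ℕ))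
      (fun p hp => by simp at hp ⊢; omega)
      (fun a _ b _ h => Fin.ext h)
  simpa using h

lemma card_fin_gt {m : ℕ} (q : ℕ) :
    (Finset.univ.filter fun p : Fin m => q < (p : ℕ)).card ≤ m - 1 - q := by
  classical
  have h : (Finset.univ.filter fun p : Fin m => q < (p : ℕ)).card
      ≤ (Finset.range (m - 1 - q)).card :=
    Finset.card_le_card_of_injOn (fun p : Fin m => (p : ℕ) - q - 1)
      (fun p hp => by
        simp only [Finset.mem_coe, Finset.mem_filter, Finset.mem_univ, true_and] at hp
        simp only [Finset.mem_coe, Finset.mem_range]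
        omega)
      (fun a ha b hb h => by
        simp only [Finset.mem_coe, Finset.mem_filter, Finset.mem_univ, true_and] at ha hb
        have h' : (a : ℕ) - q - 1 = (b : ℕ) - q - 1 := h
        exact Fin.ext (by omega))
  simpa using h

lemma count_lt {n m : ℕ} (B : Matrix (Fin n) (Fin m) ℝ) (q : Fin m) :
    (Finset.univ.filter fun p : Fin m => g B p < g B q).card ≤ q := by
  classical
  refine le_trans (Finset.card_le_card ?_) (card_fin_lt (m := m) q)
  intro p hp
  simp only [Finset.mem_filter, Finset.mem_univ, true_and] at hp ⊢
  by_contra hpq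
  have hq := g_mono B (show (q : ℕ) ≤ (p : ℕ) by omega) p.isLt
  linarith

lemma count_gt {n m : ℕ} (B : Matrix (Fin n) (Fin m) ℝ) (q : Fin m) :
    (Finset.univ.filter fun p : Fin m => g B q < g B p).card ≤ m - 1 - q := by
  classical
  refine le_trans (Finset.card_le_card ?_) (card_fin_gt (m := m) q)
  intro p hp
  simp only [Finset.mem_filter, Finset.mem_univ, true_and] at hp ⊢
  by_contra hpq
  have hq := g_mono B (show (p : ℕ) ≤ (q : ℕ) by omega) q.isLt
  linarith

-- columns
def col' {n k : ℕ} (M : Matrix (Fin n) (Fin k) ℝ) (j : Fin k) : Fin n → ℝ := fun i => M i j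

lemma col'_dot {n k : ℕ} (M : Matrix (Fin n) (Fin k) ℝ) (j : Fin k) (y : Fin n → ℝ) :
    col' M j ⬝ᵥ y = (Mᵀ *ᵥ y) j := by
  simp [col', Matrix.mulVec, dotProduct, Matrix.transpose_apply]

lemma mulVec_eq_sum {n k : ℕ} (M : Matrix (Fin n) (Fin k) ℝ) (c : Fin k → ℝ) :
    M *ᵥ c = ∑ j, c j • col' M j := by
  funext i
  simp [Matrix.mulVec, dotProduct, col', Finset.sum_apply, mul_comm]

lemma col'_eigen {m k : ℕ} {S : Matrix (Fin m) (Fin m) ℝ} {V : Matrix (Fin m) (Fin k) ℝ}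
    {d : Fin k → ℝ} (h : S * V = V * Matrix.diagonal d) (j : Fin k) :
    S *ᵥ col' V j = d j • col' V j := by
  funext i
  have h2 : ∑ l, S i l * V l j = d j * V i j := by
    have h1 := congrFun (congrFun h i) j
    simp only [Matrix.mul_apply, Matrix.diagonal_apply] at h1
    rw [h1]
    rw [Finset.sum_eq_single j]
    · simp [mul_comm]
    · intro x _ hx; rw [if_neg hx, mul_zero]
    · intro hj; exact absurd (Finset.mem_univ j) hj
  simp only [Matrix.mulVec, dotProduct, col', Pi.smul_apply, smul_eq_mul]
  rw [h2]

lemma col'_orth {m k : ℕ} {V : Matrix (Fin m) (Fin k) ℝ} (hV : Vᵀ * V = 1) (a b : Fin k) :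
    col' V a ⬝ᵥ col' V b = if a = b then 1 else 0 := by
  have := congrFun (congrFun hV a) b
  simp only [Matrix.mul_apply, Matrix.transpose_apply, Matrix.one_apply] at this
  simpa [col', dotProduct] using this

-- linear independence of orthonormal family
lemma orth_li {m : ℕ} {ι : Type} [Fintype ι] [DecidableEq ι] (u : ι → Fin m → ℝ)
    (h : ∀ a b, u a ⬝ᵥ u b = if a = b then 1 else 0) : LinearIndependent ℝ u := by
  rw [Fintype.linearIndependent_iff]
  intro c hc b
  have hthis : (∑ i, c i • u i) ⬝ᵥ u b = 0 := by rw [hc]; simp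
  have hsum : (∑ i, c i • u i) ⬝ᵥ u b = ∑ i, c i * (u i ⬝ᵥ u b) := by
    simp only [dotProduct, Finset.sum_apply, Pi.smul_apply, smul_eq_mul, Finset.mul_sum]
    rw [Finset.sum_comm]
    apply Finset.sum_congr rfl
    intro x _
    rw [Finset.sum_mul]
    apply Finset.sum_congr rfl
    intro i _
    ring
  rw [hsum, Finset.sum_eq_single b] at hthis
  · rw [h b b] at hthis; simpa using hthis
  · intro a _ hab; rw [h a b, if_neg hab]; ring
  · intro hb; exact absurd (Finset.mem_univ b) hb

lemma span_orth_eq {m : ℕ} {ι : Type} [Fintype ι] [DecidableEq ι]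
    (E : Submodule ℝ (Fin m → ℝ)) (hE : Module.finrank ℝ E ≤ Fintype.card ι)
    (u : ι → Fin m → ℝ) (horth : ∀ a b, u a ⬝ᵥ u b = if a = b then 1 else 0)
    (hmem : ∀ a, u a ∈ E) : E ≤ Submodule.span ℝ (Set.range u) := by
  have hle : Submodule.span ℝ (Set.range u) ≤ E := by
    rw [Submodule.span_le]
    rintro x ⟨a, rfl⟩
    exact hmem a
  have hfr : Module.finrank ℝ (Submodule.span ℝ (Set.range u)) = Fintype.card ι :=
    finrank_span_eq_card (orth_li u horth)
  have := Submodule.eq_of_le_of_finrank_le hle (by rw [hfr]; exact hE)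
  exact this.ge

-- eigen coefficients
lemma coeff_vanish {m : ℕ} {W : Matrix (Fin m) (Fin m) ℝ} (hW1 : Wᵀ * W = 1)
    {lm : Fin m → ℝ} {S : Matrix (Fin m) (Fin m) ℝ} (hS : S = W * Matrix.diagonal lm * Wᵀ)
    {x : Fin m → ℝ} {v : ℝ} (hx : S *ᵥ x = v • x) (i : Fin m) (hiv : lm i ≠ v) :
    (Wᵀ *ᵥ x) i = 0 := by
  have h1 : Matrix.diagonal lm *ᵥ (Wᵀ *ᵥ x) = v • (Wᵀ *ᵥ x) := by
    have h0 : Wᵀ *ᵥ (S *ᵥ x) = Matrix.diagonal lm *ᵥ (Wᵀ *ᵥ x) := by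
      rw [hS, Matrix.mulVec_mulVec, Matrix.mulVec_mulVec, ← Matrix.mul_assoc, ← Matrix.mul_assoc,
        hW1, Matrix.one_mul]
    rw [← h0, hx, Matrix.mulVec_smul]
  have h2 := congrFun h1 i
  simp only [Matrix.mulVec_diagonal, Pi.smul_apply, smul_eq_mul] at h2
  by_contra hz
  exact hiv (mul_right_cancel₀ hz h2)

lemma expand_x {m : ℕ} {W : Matrix (Fin m) (Fin m) ℝ} (hW2 : W * Wᵀ = 1) (x : Fin m → ℝ) :
    x = ∑ i, (Wᵀ *ᵥ x) i • col' W i := by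
  rw [← mulVec_eq_sum, Matrix.mulVec_mulVec, hW2, Matrix.one_mulVec]

-- quadratic form in eigencoordinates
lemma quad_form {n m : ℕ} (B : Matrix (Fin n) (Fin m) ℝ) {W : Matrix (Fin m) (Fin m) ℝ}
    (hS : Bᵀ * B = W * Matrix.diagonal (lam B) * Wᵀ) (y : Fin m → ℝ) :
    en (B *ᵥ y) ^ 2 = ∑ i, lam B i * ((Wᵀ *ᵥ y) i) ^ 2 := by
  rw [en_mulVec_sq, hS]
  rw [← Matrix.mulVec_mulVec, ← Matrix.mulVec_mulVec, dot_mulVec_t]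
  simp only [dotProduct, Matrix.mulVec_diagonal, sq]
  apply Finset.sum_congr rfl
  intro i _
  ring

lemma le_of_sq_le_sq {a b : ℝ} (ha : 0 ≤ a) (hb : 0 ≤ b) (h : a ^ 2 ≤ b ^ 2) : a ≤ b := by
  nlinarith

lemma en_zero' {p : ℕ} : en (0 : Fin p → ℝ) = 0 := by
  rw [en_eq]; simp

lemma en_pos {p : ℕ} {x : Fin p → ℝ} (hx : x ≠ 0) : 0 < en x := by
  rcases lt_or_eq_of_le (en_nonneg x) with h | h
  · exact h
  · exact absurd (en_eq_zero h.symm) hx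

lemma en_sum_sq {m : ℕ} {W : Matrix (Fin m) (Fin m) ℝ} (hW2 : W * Wᵀ = 1) (y : Fin m → ℝ) :
    en y ^ 2 = ∑ i, ((Wᵀ *ᵥ y) i) ^ 2 := by
  have hWt : Wᵀᵀ * Wᵀ = 1 := by rw [Matrix.transpose_transpose]; exact hW2
  rw [← en_orth_mulVec hWt y, en_sq]
  simp [dotProduct, sq]

-- L3
lemma mulVec_le_sval_one {n m : ℕ} (B : Matrix (Fin n) (Fin m) ℝ) (x : Fin m → ℝ) :
    en (B *ᵥ x) ≤ sval B 1 * en x := by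
  rcases Nat.eq_zero_or_pos m with hm | hm
  · subst hm
    have hx : x = 0 := Subsingleton.elim x 0
    rw [hx, Matrix.mulVec_zero, en_zero']
    have := sval_nonneg B 1
    have := en_nonneg (0 : Fin 0 → ℝ)
    nlinarith
  · obtain ⟨W, hW1, hW2, hS⟩ := spectral B
    have h1 : en (B *ᵥ x) ^ 2 ≤ sval B 1 ^ 2 * en x ^ 2 := by
      rw [quad_form B hS x, sval_sq B le_rfl hm, en_sum_sq hW2 x, Finset.mul_sum]
      apply Finset.sum_le_sum
      intro i _
      have hle : lam B i ≤ g B (m - 1) := by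
        obtain ⟨p, hp⟩ := g_mem B i
        rw [← hp]
        exact g_mono B (by omega) (by omega)
      nlinarith [sq_nonneg ((Wᵀ *ᵥ x) i)]
    apply le_of_sq_le_sq (en_nonneg _) (mul_nonneg (sval_nonneg B 1) (en_nonneg x))
    rw [mul_pow]; exact h1

-- L4
lemma sval_one_le {n m : ℕ} (B : Matrix (Fin n) (Fin m) ℝ) (c : ℝ) (hc : 0 ≤ c)
    (h : ∀ x, en (B *ᵥ x) ≤ c * en x) : sval B 1 ≤ c := by
  rcases Nat.eq_zero_or_pos m with hm | hm
  · unfold sval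
    rw [if_neg (show ¬(1 ≤ 1 ∧ 1 ≤ m) by omega)]
    exact hc
  · obtain ⟨W, hW1, hW2, hS⟩ := spectral B
    obtain ⟨i, hi⟩ := mem_g B ⟨m - 1, by omega⟩
    have heig : (Bᵀ * B) *ᵥ col' W i = lam B i • col' W i := by
      apply col'_eigen
      rw [hS, Matrix.mul_assoc, Matrix.mul_assoc, hW1, Matrix.mul_one]
    have hu1 : en (col' W i) = 1 := by
      rw [en_eq, col'_orth hW1 i i, if_pos rfl, Real.sqrt_one]
    have hq : en (B *ᵥ col' W i) ^ 2 = lam B i := by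
      rw [en_mulVec_sq, heig, dotProduct_smul, smul_eq_mul, ← en_sq, hu1]
      ring
    have hb := h (col' W i)
    rw [hu1, mul_one] at hb
    rw [sval_eq_sqrt_g B le_rfl hm]
    have hgi : g B (m - 1) = en (B *ᵥ col' W i) ^ 2 := by
      rw [hq, hi]
    rw [hgi, Real.sqrt_sq (en_nonneg _)]
    exact hb

-- H11
lemma mulVec_t_le_sval_one {n m : ℕ} (B : Matrix (Fin n) (Fin m) ℝ) (x : Fin n → ℝ) :
    en (Bᵀ *ᵥ x) ≤ sval B 1 * en x := by
  rcases eq_or_lt_of_le (en_nonneg (Bᵀ *ᵥ x)) with h0 | h0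
  · rw [← h0]
    exact mul_nonneg (sval_nonneg B 1) (en_nonneg x)
  · have h1 : en (Bᵀ *ᵥ x) ^ 2 = x ⬝ᵥ (B *ᵥ (Bᵀ *ᵥ x)) := by
      rw [en_sq, dot_mulVec_t B x (Bᵀ *ᵥ x)]
    have h2 : x ⬝ᵥ (B *ᵥ (Bᵀ *ᵥ x)) ≤ en x * (sval B 1 * en (Bᵀ *ᵥ x)) :=
      le_trans (dot_le_en_mul_en _ _)
        (mul_le_mul_of_nonneg_left (mulVec_le_sval_one B _) (en_nonneg x))
    nlinarith

-- G-lower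
lemma g_lower {n m k : ℕ} (B : Matrix (Fin n) (Fin m) ℝ) (hk1 : 1 ≤ k) (hkm : k ≤ m)
    (V : Matrix (Fin m) (Fin k) ℝ) :
    ∃ c : Fin k → ℝ, c ≠ 0 ∧ en (B *ᵥ (V *ᵥ c)) ≤ sval B k * en (V *ᵥ c) := by
  classical
  obtain ⟨W, hW1, hW2, hS⟩ := spectral B
  set t := g B (m - k) with ht
  set Gc := Finset.univ.filter (fun i : Fin m => t < lam B i) with hGc
  have hcard : Gc.card ≤ k - 1 := by
    rw [hGc, card_eq B (fun r => t < r)]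
    have hcg := count_gt B ⟨m - k, by omega⟩
    simp only [Fin.val_mk] at hcg
    rw [ht]
    omega
  let φ : (Fin k → ℝ) →ₗ[ℝ] (↥Gc → ℝ) :=
    { toFun := fun c => fun i => (Wᵀ *ᵥ (V *ᵥ c)) (i : Fin m)
      map_add' := by intro a b; funext i; simp [Matrix.mulVec_add]
      map_smul' := by intro r a; funext i; simp [Matrix.mulVec_smul] }
  have hker : ∃ c : Fin k → ℝ, c ≠ 0 ∧ φ c = 0 := by
    have hrank := LinearMap.finrank_range_add_finrank_ker φ
    have hdom : Module.finrank ℝ (Fin k → ℝ) = k := by simp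
    have hrle : Module.finrank ℝ (LinearMap.range φ) ≤ Gc.card := by
      have hcod : Module.finrank ℝ (↥Gc → ℝ) = Gc.card := by simp
      rw [← hcod]; exact (LinearMap.range φ).finrank_le
    have hkerpos : 0 < Module.finrank ℝ (LinearMap.ker φ) := by omega
    have hne : LinearMap.ker φ ≠ ⊥ := by
      intro hbot
      rw [hbot] at hkerpos
      simp at hkerpos
    obtain ⟨c, hc, hcne⟩ := (Submodule.ne_bot_iff _).mp hne
    exact ⟨c, hcne, hc⟩
  obtain ⟨c, hcne, hc0⟩ := hker
  refine ⟨c, hcne, ?_⟩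
  set y := V *ᵥ c with hy
  have hz : ∀ i : Fin m, t < lam B i → (Wᵀ *ᵥ y) i = 0 := by
    intro i hi
    have hmem : i ∈ Gc := by rw [hGc]; simp [hi]
    have := congrFun hc0 ⟨i, hmem⟩
    simpa [φ, hy, Matrix.mulVec_mulVec] using this
  have hsq : en (B *ᵥ y) ^ 2 ≤ sval B k ^ 2 * en y ^ 2 := by
    rw [quad_form B hS y, sval_sq B hk1 hkm, en_sum_sq hW2 y, Finset.mul_sum]
    apply Finset.sum_le_sum
    intro i _
    by_cases hgt : t < lam B i
    · rw [hz i hgt]; simp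
    · push_neg at hgt
      nlinarith [sq_nonneg ((Wᵀ *ᵥ y) i), g_nonneg B (m - k)]
  exact le_of_sq_le_sq (en_nonneg _) (mul_nonneg (sval_nonneg B k) (en_nonneg y))
    (by rw [mul_pow]; exact hsq)

-- G-lower-dual
lemma g_lower_perp {n m k : ℕ} (B : Matrix (Fin n) (Fin m) ℝ) (hkm : k < m)
    (V : Matrix (Fin m) (Fin k) ℝ) :
    ∃ y : Fin m → ℝ, y ≠ 0 ∧ Vᵀ *ᵥ y = 0 ∧ sval B (k + 1) * en y ≤ en (B *ᵥ y) := by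
  classical
  obtain ⟨W, hW1, hW2, hS⟩ := spectral B
  set t := g B (m - (k + 1)) with ht
  set Tc := Finset.univ.filter (fun i : Fin m => lam B i < t) with hTc
  have hcard : Tc.card ≤ m - k - 1 := by
    rw [hTc, card_eq B (fun r => r < t)]
    have hcl := count_lt B ⟨m - (k + 1), by omega⟩
    simp only [Fin.val_mk] at hcl
    rw [ht]
    omega
  let φ : (Fin m → ℝ) →ₗ[ℝ] (Fin k → ℝ) × (↥Tc → ℝ) :=
    { toFun := fun y => (Vᵀ *ᵥ y, fun i => (Wᵀ *ᵥ y) (i : Fin m))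
      map_add' := by intro a b; simp [Matrix.mulVec_add]; rfl
      map_smul' := by intro r a; simp [Matrix.mulVec_smul]; rfl }
  have hker : ∃ y : Fin m → ℝ, y ≠ 0 ∧ φ y = 0 := by
    have hrank := LinearMap.finrank_range_add_finrank_ker φ
    have hdom : Module.finrank ℝ (Fin m → ℝ) = m := by simp
    have hrle : Module.finrank ℝ (LinearMap.range φ) ≤ k + Tc.card := by
      have hcod : Module.finrank ℝ ((Fin k → ℝ) × (↥Tc → ℝ)) = k + Tc.card := by simp
      rw [← hcod]; exact (LinearMap.range φ).finrank_le
    have hkerpos : 0 < Module.finrank ℝ (LinearMap.ker φ) := by omega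
    have hne : LinearMap.ker φ ≠ ⊥ := by
      intro hbot
      rw [hbot] at hkerpos
      simp at hkerpos
    obtain ⟨y, hy, hyne⟩ := (Submodule.ne_bot_iff _).mp hne
    exact ⟨y, hyne, hy⟩
  obtain ⟨y, hyne, hy0⟩ := hker
  have hVy : Vᵀ *ᵥ y = 0 := congrArg Prod.fst hy0
  have hz : ∀ i : Fin m, lam B i < t → (Wᵀ *ᵥ y) i = 0 := by
    intro i hi
    have hmem : i ∈ Tc := by rw [hTc]; simp [hi]
    have := congrFun (congrArg Prod.snd hy0) ⟨i, hmem⟩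
    simpa [φ] using this
  refine ⟨y, hyne, hVy, ?_⟩
  have hsq : sval B (k + 1) ^ 2 * en y ^ 2 ≤ en (B *ᵥ y) ^ 2 := by
    rw [quad_form B hS y, sval_sq B (by omega) (by omega), en_sum_sq hW2 y, Finset.mul_sum]
    apply Finset.sum_le_sum
    intro i _
    by_cases hlt : lam B i < t
    · rw [hz i hlt]
      simp
    · push_neg at hlt
      nlinarith [sq_nonneg ((Wᵀ *ᵥ y) i), g_nonneg B (m - (k + 1))]
  exact le_of_sq_le_sq (mul_nonneg (sval_nonneg B (k + 1)) (en_nonneg y)) (en_nonneg _)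
    (by rw [mul_pow]; exact hsq)

-- G-upper
lemma g_upper {n m k : ℕ} (B : Matrix (Fin n) (Fin m) ℝ) (hkm : k < m)
    (V : Matrix (Fin m) (Fin k) ℝ) (hV : Vᵀ * V = 1)
    (hSV : (Bᵀ * B) * V = V * Matrix.diagonal (fun j : Fin k => sval B ((j : ℕ) + 1) ^ 2))
    (y : Fin m → ℝ) (hy : Vᵀ *ᵥ y = 0) :
    en (B *ᵥ y) ≤ sval B (k + 1) * en y := by
  classical
  obtain ⟨W, hW1, hW2, hS⟩ := spectral B
  set t := g B (m - (k + 1)) with ht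
  have hd : ∀ j : Fin k, sval B ((j : ℕ) + 1) ^ 2 = g B (m - 1 - (j : ℕ)) := by
    intro j
    rw [sval_sq B (by omega) (by omega)]
    congr 1
    omega
  have hz : ∀ i : Fin m, t < lam B i → (Wᵀ *ᵥ y) i = 0 := by
    intro i hiv
    set v := lam B i with hv
    set Fv := Finset.univ.filter (fun i' : Fin m => lam B i' = v) with hFv
    set Jv := Finset.univ.filter (fun j : Fin k => g B (m - 1 - (j : ℕ)) = v) with hJv
    have key : ∀ p : Fin m, g B (p : ℕ) = v → m - k ≤ (p : ℕ) := by
      intro p hp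
      by_contra hc
      have hmono := g_mono B (show (p : ℕ) ≤ m - (k + 1) by omega) (by omega)
      rw [hp] at hmono
      exact absurd hiv (not_lt.mpr hmono)
    have hcards : Fv.card = Jv.card := by
      rw [hFv, card_eq B (fun r => r = v)]
      refine Finset.card_bij'
        (fun p hp => (⟨m - 1 - (p : ℕ), by
          have h1 := key p (Finset.mem_filter.mp hp).2
          omega⟩ : Fin k))
        (fun j _ => (⟨m - 1 - (j : ℕ), by omega⟩ : Fin m)) ?_ ?_ ?_ ?_
      · intro p hp
        have hp2 := (Finset.mem_filter.mp hp).2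
        have h1 := key p hp2
        rw [hJv]
        simp only [Finset.mem_filter, Finset.mem_univ, true_and]
        have h2 : m - 1 - (m - 1 - (p : ℕ)) = (p : ℕ) := by omega
        rw [h2]
        exact hp2
      · intro j hj
        rw [hJv] at hj
        simp only [Finset.mem_filter, Finset.mem_univ, true_and] at hj ⊢
        exact hj
      · intro p hp
        have h1 := key p (Finset.mem_filter.mp hp).2
        exact Fin.ext (by simp only [Fin.val_mk]; omega)
      · intro j hj
        have : (j : ℕ) < k := j.isLt
        exact Fin.ext (by simp only [Fin.val_mk]; omega)
    set E := Submodule.span ℝ ((Fv.image (col' W) : Finset (Fin m → ℝ)) : Set (Fin m → ℝ)) with hE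
    have hfr : Module.finrank ℝ E ≤ Fintype.card ↥Jv := by
      rw [Fintype.card_coe, ← hcards]
      exact le_trans (finrank_span_finset_le_card _) Finset.card_image_le
    have horth : ∀ a b : ↥Jv, col' V (a : Fin k) ⬝ᵥ col' V (b : Fin k)
        = if a = b then 1 else 0 := by
      intro a b
      rw [col'_orth hV]
      by_cases hab : a = b
      · rw [if_pos hab, if_pos (by rw [hab])]
      · rw [if_neg hab, if_neg (fun h => hab (Subtype.ext h))]
    have hmem : ∀ a : ↥Jv, col' V (a : Fin k) ∈ E := by
      rintro ⟨j, hj⟩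
      have hscal : sval B ((j : ℕ) + 1) ^ 2 = v := by
        rw [hd j]
        rw [hJv] at hj
        exact (Finset.mem_filter.mp hj).2
      have heig : (Bᵀ * B) *ᵥ col' V j = v • col' V j := by
        have h0 := col'_eigen hSV j
        rwa [hscal] at h0
      have hexp := expand_x hW2 (col' V j)
      rw [hexp]
      apply Submodule.sum_mem
      intro i' _
      by_cases hmemF : i' ∈ Fv
      · exact Submodule.smul_mem _ _
          (Submodule.subset_span (Finset.mem_coe.mpr (Finset.mem_image_of_mem _ hmemF)))
      · have hne : lam B i' ≠ v := by
          rw [hFv] at hmemF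
          simpa using hmemF
        rw [coeff_vanish hW1 hS heig i' hne, zero_smul]
        exact Submodule.zero_mem _
    have hspan := span_orth_eq E hfr (fun a : ↥Jv => col' V (a : Fin k)) horth hmem
    have hwiE : col' W i ∈ E := by
      apply Submodule.subset_span
      apply Finset.mem_coe.mpr
      apply Finset.mem_image_of_mem
      rw [hFv]
      simp [hv]
    have hwi := hspan hwiE
    have hdot : ∀ x ∈ Submodule.span ℝ (Set.range fun a : ↥Jv => col' V (a : Fin k)),
        x ⬝ᵥ y = 0 := by
      intro x hx
      refine Submodule.span_induction ?_ ?_ ?_ ?_ hx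
      · rintro _ ⟨a, rfl⟩
        rw [col'_dot, hy]
        rfl
      · simp
      · intro a b _ _ ha hb
        rw [add_dotProduct, ha, hb]
        ring
      · intro r a _ ha
        rw [smul_dotProduct, ha]
        simp
    have hfin := hdot _ hwi
    rw [col'_dot] at hfin
    exact hfin
  have hsq : en (B *ᵥ y) ^ 2 ≤ sval B (k + 1) ^ 2 * en y ^ 2 := by
    rw [quad_form B hS y, sval_sq B (by omega) (by omega), en_sum_sq hW2 y, Finset.mul_sum]
    apply Finset.sum_le_sum
    intro i _
    by_cases hgt : t < lam B i
    · rw [hz i hgt]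
      simp
    · push_neg at hgt
      nlinarith [sq_nonneg ((Wᵀ *ᵥ y) i), g_nonneg B (m - (k + 1)), lam_nonneg B i]
  exact le_of_sq_le_sq (en_nonneg _)
    (mul_nonneg (sval_nonneg B (k + 1)) (en_nonneg y)) (by rw [mul_pow]; exact hsq)

end WedinAux

open WedinAux

set_option maxHeartbeats 2000000 in
/-- Wedin's theorem for the top-`k` singular subspace. If `A` has rank `k`
and `‖Â − A‖ ≤ ε ≤ σ_k(A)/2`, then the projections onto the column spans of the rank-`k`
truncated SVD left factors satisfy `‖Û Ûᵀ − U Uᵀ‖ ≤ 4ε/σ_k(A)`. -/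
theorem projection_perturbation
    {n m k : ℕ} (hk : k ≤ min n m)
    (A Ahat : Matrix (Fin n) (Fin m) ℝ) (ε : ℝ)
    (hrank : 0 < sval A k) (hrank' : sval A (k + 1) = 0)
    (hpert : matSpectralNorm (Ahat - A) ≤ ε) (hε : ε ≤ sval A k / 2)
    (U : Matrix (Fin n) (Fin k) ℝ) (V : Matrix (Fin m) (Fin k) ℝ)
    (D : Matrix (Fin k) (Fin k) ℝ)
    (hU : Uᵀ * U = 1) (hV : Vᵀ * V = 1)
    (hD : D = Matrix.diagonal fun i : Fin k => sval A (i.val + 1))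
    (hAV : A * V = U * D) (hAU : Aᵀ * U = V * D)
    (Uhat : Matrix (Fin n) (Fin k) ℝ) (Vhat : Matrix (Fin m) (Fin k) ℝ)
    (Dhat : Matrix (Fin k) (Fin k) ℝ)
    (hUhat : Uhatᵀ * Uhat = 1) (hVhat : Vhatᵀ * Vhat = 1)
    (hDhat : Dhat = Matrix.diagonal fun i : Fin k => sval Ahat (i.val + 1))
    (hAVhat : Ahat * Vhat = Uhat * Dhat) (hAUhat : Ahatᵀ * Uhat = Vhat * Dhat) :
    matSpectralNorm (Uhat * Uhatᵀ - U * Uᵀ) ≤ 4 * ε / sval A k := by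
  classical
  have hkm : k ≤ m := le_trans hk (min_le_right n m)
  have hk1 : 1 ≤ k := by
    by_contra h
    have hk0 : k = 0 := by omega
    rw [hk0] at hrank
    unfold sval at hrank
    rw [if_neg (show ¬(1 ≤ 0 ∧ 0 ≤ m) by omega)] at hrank
    exact absurd hrank (lt_irrefl 0)
  set σ := sval A k with hσdef
  have hσpos : 0 < σ := hrank
  have hpert2 : sval (Ahat - A) 1 ≤ ε := hpert
  have hεnn : 0 ≤ ε := le_trans (WedinAux.sval_nonneg (Ahat - A) 1) hpert2
  -- pointwise perturbation bounds
  have hpertv : ∀ x : Fin m → ℝ, en (Ahat *ᵥ x - A *ᵥ x) ≤ ε * en x := by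
    intro x
    rw [← Matrix.sub_mulVec]
    exact le_trans (mulVec_le_sval_one _ x)
      (mul_le_mul_of_nonneg_right hpert2 (en_nonneg x))
  have hpertt : ∀ x : Fin n → ℝ, en (Ahatᵀ *ᵥ x - Aᵀ *ᵥ x) ≤ ε * en x := by
    intro x
    rw [← Matrix.sub_mulVec, ← Matrix.transpose_sub]
    exact le_trans (mulVec_t_le_sval_one _ x)
      (mul_le_mul_of_nonneg_right hpert2 (en_nonneg x))
  -- the diagonal entries of D
  have hDlow : ∀ j : Fin k, σ ≤ sval A ((j : ℕ) + 1) := by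
    intro j
    exact sval_antitone A (by omega) (by omega) hkm
  -- hSV for A
  have hSV : Aᵀ * A * V = V * Matrix.diagonal (fun j : Fin k => sval A ((j : ℕ) + 1) ^ 2) := by
    calc Aᵀ * A * V = Aᵀ * (A * V) := by rw [Matrix.mul_assoc]
    _ = Aᵀ * (U * D) := by rw [hAV]
    _ = (Aᵀ * U) * D := by rw [Matrix.mul_assoc]
    _ = V * D * D := by rw [hAU]
    _ = V * (D * D) := by rw [Matrix.mul_assoc]
    _ = _ := by
        rw [hD, Matrix.diagonal_mul_diagonal]
        have : (fun i : Fin k => sval A ((i : ℕ) + 1) * sval A ((i : ℕ) + 1))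
            = fun j : Fin k => sval A ((j : ℕ) + 1) ^ 2 := by
          funext j
          ring
        rw [this]
  -- Step 1: A kills the orthogonal complement of V
  have hAker : ∀ y : Fin m → ℝ, Vᵀ *ᵥ y = 0 → A *ᵥ y = 0 := by
    rcases eq_or_lt_of_le hkm with hkem | hklt
    · subst hkem
      intro y hy
      have hVV : V * Vᵀ = 1 := mul_eq_one_comm.mp hV
      have : y = 0 := by
        have h1 : (V * Vᵀ) *ᵥ y = y := by rw [hVV, Matrix.one_mulVec]
        rw [← Matrix.mulVec_mulVec, hy, Matrix.mulVec_zero] at h1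
        exact h1.symm
      rw [this, Matrix.mulVec_zero]
    · intro y hy
      have h0 := g_upper A hklt V hV hSV y hy
      rw [hrank'] at h0
      rw [zero_mul] at h0
      exact en_eq_zero (le_antisymm h0 (en_nonneg _))
  -- A = U D Vᵀ pointwise
  have hA_eq : ∀ x : Fin m → ℝ, A *ᵥ x = U *ᵥ (D *ᵥ (Vᵀ *ᵥ x)) := by
    intro x
    have hperp : Vᵀ *ᵥ (x - V *ᵥ (Vᵀ *ᵥ x)) = 0 := by
      rw [Matrix.mulVec_sub, Matrix.mulVec_mulVec, Matrix.mulVec_mulVec, hV, Matrix.one_mul,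
        sub_self]
    have h1 : A *ᵥ (x - V *ᵥ (Vᵀ *ᵥ x)) = 0 := hAker _ hperp
    rw [Matrix.mulVec_sub] at h1
    have h2 : A *ᵥ x = A *ᵥ (V *ᵥ (Vᵀ *ᵥ x)) := by
      have := sub_eq_zero.mp h1
      exact this
    rw [h2, Matrix.mulVec_mulVec, hAV, ← Matrix.mulVec_mulVec]
  -- transpose relation : Vᵀ Aᵀ = D Uᵀ
  have hVA : Vᵀ * Aᵀ = D * Uᵀ := by
    rw [← Matrix.transpose_mul, hAV, Matrix.transpose_mul]
    congr 1
    rw [hD, Matrix.diagonal_transpose]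
  -- (b) sval Ahat k ≥ σ - ε
  have hσhat : σ - ε ≤ sval Ahat k := by
    obtain ⟨c, hcne, hcle⟩ := g_lower Ahat hk1 hkm V
    have hcpos : 0 < en c := en_pos hcne
    have hVc : Vᵀ *ᵥ (V *ᵥ c) = c := by
      rw [Matrix.mulVec_mulVec, hV, Matrix.one_mulVec]
    have hAVc : A *ᵥ (V *ᵥ c) = U *ᵥ (D *ᵥ c) := by rw [hA_eq, hVc]
    have hDc : D *ᵥ c = fun j : Fin k => sval A ((j : ℕ) + 1) * c j := by
      funext j
      rw [hD, Matrix.mulVec_diagonal]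
    have hlow : σ * en c ≤ en (A *ᵥ (V *ᵥ c)) := by
      rw [hAVc, en_orth_mulVec hU, hDc]
      exact en_diag_lower hσpos.le hDlow c
    have htri : en (A *ᵥ (V *ᵥ c)) ≤ en (Ahat *ᵥ (V *ᵥ c)) + ε * en (V *ᵥ c) := by
      have h4 := en_sub_le (Ahat *ᵥ (V *ᵥ c)) (Ahat *ᵥ (V *ᵥ c) - A *ᵥ (V *ᵥ c))
      have h5 : Ahat *ᵥ (V *ᵥ c) - (Ahat *ᵥ (V *ᵥ c) - A *ᵥ (V *ᵥ c)) = A *ᵥ (V *ᵥ c) := by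
        abel
      rw [h5] at h4
      have h6 := hpertv (V *ᵥ c)
      linarith
    have henVc : en (V *ᵥ c) = en c := en_orth_mulVec hV c
    rw [henVc] at htri hcle
    have : σ * en c ≤ sval Ahat k * en c + ε * en c := by linarith
    nlinarith
  -- entries of Dhat are ≥ σ/2
  have hdhat : ∀ j : Fin k, σ / 2 ≤ sval Ahat ((j : ℕ) + 1) := by
    intro j
    have h1 := sval_antitone Ahat (show 1 ≤ (j : ℕ) + 1 by omega) (by omega) hkm
    linarith
  -- (c-pre) sval Ahat (k+1) ≤ ε when k < m, and (c)
  have hchat : ∀ y : Fin m → ℝ, Vhatᵀ *ᵥ y = 0 → en (Ahat *ᵥ y) ≤ ε * en y := by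
    rcases eq_or_lt_of_le hkm with hkem | hklt
    · subst hkem
      intro y hy
      have hVV : Vhat * Vhatᵀ = 1 := mul_eq_one_comm.mp hVhat
      have hy0 : y = 0 := by
        have h1 : (Vhat * Vhatᵀ) *ᵥ y = y := by rw [hVV, Matrix.one_mulVec]
        rw [← Matrix.mulVec_mulVec, hy, Matrix.mulVec_zero] at h1
        exact h1.symm
      rw [hy0, Matrix.mulVec_zero, en_zero', en_zero', mul_zero]
    · have hshat : sval Ahat (k + 1) ≤ ε := by
        obtain ⟨y0, hy0ne, hy0perp, hy0ge⟩ := g_lower_perp Ahat hklt V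
        have hA0 : A *ᵥ y0 = 0 := hAker y0 hy0perp
        have h1 : en (Ahat *ᵥ y0) ≤ ε * en y0 := by
          have := hpertv y0
          rw [hA0, sub_zero] at this
          exact this
        have hy0pos : 0 < en y0 := en_pos hy0ne
        nlinarith
      have hSVhat : Ahatᵀ * Ahat * Vhat
          = Vhat * Matrix.diagonal (fun j : Fin k => sval Ahat ((j : ℕ) + 1) ^ 2) := by
        calc Ahatᵀ * Ahat * Vhat = Ahatᵀ * (Ahat * Vhat) := by rw [Matrix.mul_assoc]
        _ = Ahatᵀ * (Uhat * Dhat) := by rw [hAVhat]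
        _ = (Ahatᵀ * Uhat) * Dhat := by rw [Matrix.mul_assoc]
        _ = Vhat * Dhat * Dhat := by rw [hAUhat]
        _ = Vhat * (Dhat * Dhat) := by rw [Matrix.mul_assoc]
        _ = _ := by
            rw [hDhat, Matrix.diagonal_mul_diagonal]
            have : (fun i : Fin k => sval Ahat ((i : ℕ) + 1) * sval Ahat ((i : ℕ) + 1))
                = fun j : Fin k => sval Ahat ((j : ℕ) + 1) ^ 2 := by
              funext j
              ring
            rw [this]
      intro y hy
      have h0 := g_upper Ahat hklt Vhat hVhat hSVhat y hy
      calc en (Ahat *ᵥ y) ≤ sval Ahat (k + 1) * en y := h0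
      _ ≤ ε * en y := mul_le_mul_of_nonneg_right hshat (en_nonneg y)
  -- MAIN estimate
  unfold matSpectralNorm
  apply sval_one_le _ _ (div_nonneg (by linarith) hσpos.le)
  intro x
  set ch := Uhatᵀ *ᵥ x with hch
  set px := Uhat *ᵥ ch with hpx
  set w := x - px with hw
  -- decomposition
  have hdecomp : (Uhat * Uhatᵀ - U * Uᵀ) *ᵥ x
      = (px - U *ᵥ (Uᵀ *ᵥ px)) - (U *ᵥ (Uᵀ *ᵥ w)) := by
    rw [Matrix.sub_mulVec, ← Matrix.mulVec_mulVec, ← Matrix.mulVec_mulVec, ← hch, ← hpx, hw,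
      Matrix.mulVec_sub Uᵀ, Matrix.mulVec_sub U]
    abel
  rw [hdecomp]
  -- bound on t2
  have hUw : Uhatᵀ *ᵥ w = 0 := by
    have huu : Uhatᵀ *ᵥ (Uhat *ᵥ ch) = ch := by
      rw [Matrix.mulVec_mulVec, hUhat, Matrix.one_mulVec]
    rw [hw, Matrix.mulVec_sub, hpx, huu, ← hch, sub_self]
  have ht2 : en (U *ᵥ (Uᵀ *ᵥ w)) ≤ 2 * ε / σ * en x := by
    have hyv : en (Ahatᵀ *ᵥ w) ≤ ε * en w := by
      set yv := Ahatᵀ *ᵥ w with hyvdef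
      set q := Vhatᵀ *ᵥ yv with hq
      set y2 := yv - Vhat *ᵥ q with hy2
      have hperp2 : Vhatᵀ *ᵥ y2 = 0 := by
        have hvv : Vhatᵀ *ᵥ (Vhat *ᵥ q) = q := by
          rw [Matrix.mulVec_mulVec, hVhat, Matrix.one_mulVec]
        rw [hy2, Matrix.mulVec_sub, hvv, ← hq, sub_self]
      have hdot1 : yv ⬝ᵥ (Vhat *ᵥ q) = 0 := by
        rw [hyvdef]
        rw [← dot_mulVec_t Ahat w (Vhat *ᵥ q)]
        rw [Matrix.mulVec_mulVec, hAVhat, ← Matrix.mulVec_mulVec]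
        rw [dot_mulVec_t Uhat w (Dhat *ᵥ q), hUw]
        exact zero_dotProduct _
      have hdot2 : yv ⬝ᵥ y2 ≤ en w * (ε * en yv) := by
        have hcs : yv ⬝ᵥ y2 ≤ en w * en (Ahat *ᵥ y2) := by
          rw [hyvdef, ← dot_mulVec_t Ahat w y2]
          exact dot_le_en_mul_en _ _
        have hb := hchat y2 hperp2
        have hy2le : en y2 ≤ en yv := by
          rw [hy2, hq]
          exact en_perp_le hVhat yv
        calc yv ⬝ᵥ y2 ≤ en w * en (Ahat *ᵥ y2) := hcs
        _ ≤ en w * (ε * en y2) := mul_le_mul_of_nonneg_left hb (en_nonneg w)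
        _ ≤ en w * (ε * en yv) := by
            apply mul_le_mul_of_nonneg_left _ (en_nonneg w)
            exact mul_le_mul_of_nonneg_left hy2le hεnn
      have hsq : en yv ^ 2 ≤ en w * (ε * en yv) := by
        rw [en_sq]
        have : yv ⬝ᵥ yv = yv ⬝ᵥ (Vhat *ᵥ q) + yv ⬝ᵥ y2 := by
          rw [hy2, dotProduct_sub]
          ring
        rw [this, hdot1, zero_add]
        exact hdot2
      rcases eq_or_lt_of_le (en_nonneg yv) with h0 | h0
      · rw [← h0]
        exact mul_nonneg hεnn (en_nonneg w)
      · nlinarith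
    -- now the D-inverse step
    have hDe : D *ᵥ (Uᵀ *ᵥ w) = Vᵀ *ᵥ (Aᵀ *ᵥ w) := by
      rw [Matrix.mulVec_mulVec, Matrix.mulVec_mulVec, hVA]
    have hlowD : σ * en (Uᵀ *ᵥ w) ≤ en (D *ᵥ (Uᵀ *ᵥ w)) := by
      have hDc : D *ᵥ (Uᵀ *ᵥ w) = fun j : Fin k => sval A ((j : ℕ) + 1) * (Uᵀ *ᵥ w) j := by
        funext j
        rw [hD, Matrix.mulVec_diagonal]
      rw [hDc]
      exact en_diag_lower hσpos.le hDlow _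
    have hAtw : en (Aᵀ *ᵥ w) ≤ 2 * ε * en w := by
      have h4 := en_sub_le (Ahatᵀ *ᵥ w) (Ahatᵀ *ᵥ w - Aᵀ *ᵥ w)
      have h5 : Ahatᵀ *ᵥ w - (Ahatᵀ *ᵥ w - Aᵀ *ᵥ w) = Aᵀ *ᵥ w := by abel
      rw [h5] at h4
      have h6 := hpertt w
      have h7 := hyv
      linarith
    have hVAw : en (Vᵀ *ᵥ (Aᵀ *ᵥ w)) ≤ en (Aᵀ *ᵥ w) := en_t_mulVec_le hV _
    have hwx : en w ≤ en x := by
      rw [hw, hpx, hch]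
      exact en_perp_le hUhat x
    have hfin : σ * en (Uᵀ *ᵥ w) ≤ 2 * ε * en x := by
      calc σ * en (Uᵀ *ᵥ w) ≤ en (D *ᵥ (Uᵀ *ᵥ w)) := hlowD
      _ = en (Vᵀ *ᵥ (Aᵀ *ᵥ w)) := by rw [hDe]
      _ ≤ en (Aᵀ *ᵥ w) := hVAw
      _ ≤ 2 * ε * en w := hAtw
      _ ≤ 2 * ε * en x := by nlinarith
    rw [en_orth_mulVec hU]
    rw [div_mul_eq_mul_div, le_div_iff₀ hσpos]
    nlinarith
  -- bound on t1
  have ht1 : en (px - U *ᵥ (Uᵀ *ᵥ px)) ≤ 2 * ε / σ * en x := by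
    set dh := fun j : Fin k => sval Ahat ((j : ℕ) + 1) with hdh
    set c' := fun j : Fin k => ch j / dh j with hc'
    have hdhpos : ∀ j, 0 < dh j := fun j => lt_of_lt_of_le (by linarith) (hdhat j)
    have hDc' : Dhat *ᵥ c' = ch := by
      funext j
      rw [hDhat, Matrix.mulVec_diagonal]
      exact mul_div_cancel₀ _ (ne_of_gt (hdhpos j))
    have hpx2 : px = Ahat *ᵥ (Vhat *ᵥ c') := by
      rw [hpx, ← hDc', Matrix.mulVec_mulVec, Matrix.mulVec_mulVec, hAVhat]
    set y' := Vhat *ᵥ c' with hy'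
    set z := Ahat *ᵥ y' - A *ᵥ y' with hz
    have ht1eq : px - U *ᵥ (Uᵀ *ᵥ px) = z - U *ᵥ (Uᵀ *ᵥ z) := by
      have hAy' : A *ᵥ y' = U *ᵥ (D *ᵥ (Vᵀ *ᵥ y')) := hA_eq y'
      have hpxz : px = z + U *ᵥ (D *ᵥ (Vᵀ *ᵥ y')) := by
        rw [hz, ← hAy', hpx2]
        abel
      have hUUzz : Uᵀ *ᵥ (U *ᵥ (D *ᵥ (Vᵀ *ᵥ y'))) = D *ᵥ (Vᵀ *ᵥ y') := by
        rw [Matrix.mulVec_mulVec, hU, Matrix.one_mulVec]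
      rw [hpxz, Matrix.mulVec_add Uᵀ, hUUzz, Matrix.mulVec_add U]
      abel
    have henz : en z ≤ ε * en y' := hpertv y'
    have hyc' : en y' = en c' := en_orth_mulVec hVhat c'
    have hmul : (fun j => dh j * c' j) = ch := by
      funext j
      exact mul_div_cancel₀ _ (ne_of_gt (hdhpos j))
    have hlowc' : σ / 2 * en c' ≤ en ch := by
      rw [← hmul]
      exact en_diag_lower (by linarith) hdhat c'
    have hchx : en ch ≤ en x := by
      rw [hch]
      exact en_t_mulVec_le hUhat x
    have h1 : en (px - U *ᵥ (Uᵀ *ᵥ px)) ≤ ε * en c' := by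
      rw [ht1eq]
      calc en (z - U *ᵥ (Uᵀ *ᵥ z)) ≤ en z := en_perp_le hU z
      _ ≤ ε * en y' := henz
      _ = ε * en c' := by rw [hyc']
    rw [div_mul_eq_mul_div, le_div_iff₀ hσpos]
    have henc' : 0 ≤ en c' := en_nonneg c'
    nlinarith
  -- combine
  calc en ((px - U *ᵥ (Uᵀ *ᵥ px)) - U *ᵥ (Uᵀ *ᵥ w))
      ≤ en (px - U *ᵥ (Uᵀ *ᵥ px)) + en (U *ᵥ (Uᵀ *ᵥ w)) := en_sub_le _ _
  _ ≤ 2 * ε / σ * en x + 2 * ε / σ * en x := add_le_add ht1 ht2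
  _ = 4 * ε / σ * en x := by ring
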